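/- Let k ≥ 3 and for c > k let λ_{k,c} be the unique positive root of λ f_{k−1}(λ)/f_k(λ) = c, and q_{k,c} = λ_{k,c}^{k−1}/((k−1)! f_{k−1}(λ_{k,c})). Then c ↦ (k−1) q_{k,c} is strictly decreasing on (k, ∞), and at c = c_k' := μ* f_{k−1}(μ*)/f_k(μ*) (where μ* is the unique positive solution of μ^{k−1}/(k−2)! = f_{k−1}(μ)) it takes the value 1. -/

import Mathlib

open Real Finset

noncomputable def fTail (j : ℕ) (x : ℝ) : ℝ :=
  Real.exp x - ∑ i ∈ Finset.range j, x ^ i / (Nat.factorial i : ℝ)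

lemma exp_tsum (x : ℝ) : Real.exp x = ∑' n : ℕ, x ^ n / (Nat.factorial n : ℝ) := by
  rw [Real.exp_eq_exp_ℝ, NormedSpace.exp_eq_tsum_div]

lemma summable_tail (j : ℕ) (x : ℝ) :
    Summable (fun n : ℕ => x ^ (n + j) / (Nat.factorial (n + j) : ℝ)) :=
  (summable_nat_add_iff j).2 (Real.summable_pow_div_factorial x)

lemma fTail_tsum (j : ℕ) (x : ℝ) :
    fTail j x = ∑' n : ℕ, x ^ (n + j) / (Nat.factorial (n + j) : ℝ) := by
  have h := Summable.sum_add_tsum_nat_add (f := fun n : ℕ => x ^ n / (Nat.factorial n : ℝ)) j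
    (Real.summable_pow_div_factorial x)
  rw [fTail, exp_tsum, ← h]
  ring

lemma fTail_pos {j : ℕ} {x : ℝ} (hx : 0 < x) : 0 < fTail j x := by
  rw [fTail_tsum]
  have : 0 < x ^ (0 + j) / (Nat.factorial (0 + j) : ℝ) := by positivity
  calc (0:ℝ) < x ^ (0 + j) / (Nat.factorial (0 + j) : ℝ) := this
  _ ≤ _ := Summable.le_tsum (summable_tail j x) 0 (fun m _ => by positivity)

lemma fTail_succ (j : ℕ) (x : ℝ) :
    fTail j x = fTail (j+1) x + x ^ j / (Nat.factorial j : ℝ) := by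
  rw [fTail, fTail, Finset.sum_range_succ]; ring

lemma hasDerivAt_fTail (j : ℕ) (x : ℝ) :
    HasDerivAt (fTail (j+1)) (fTail j x) x := by
  have hpoly : HasDerivAt (fun y : ℝ => ∑ i ∈ Finset.range (j+1), y ^ i / (Nat.factorial i : ℝ))
      (∑ i ∈ Finset.range j, x ^ i / (Nat.factorial i : ℝ)) x := by
    have : HasDerivAt (fun y : ℝ => ∑ i ∈ Finset.range (j+1), y ^ i / (Nat.factorial i : ℝ))
        (∑ i ∈ Finset.range (j+1), (i : ℝ) * x ^ (i - 1) / (Nat.factorial i : ℝ)) x := by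
      exact HasDerivAt.fun_sum (fun i _ => ((hasDerivAt_pow i x).div_const _))
    convert this using 1
    rw [Finset.sum_range_succ' (fun i => (i : ℝ) * x ^ (i - 1) / (Nat.factorial i : ℝ))]
    simp only [Nat.cast_zero, Nat.factorial_zero, Nat.cast_one, zero_mul, zero_div, add_zero]
    apply Finset.sum_congr rfl
    intro i _
    push_cast [Nat.factorial_succ]
    field_simp
  have := (Real.hasDerivAt_exp x).fun_sub hpoly
  exact this


lemma fact_ineq (m : ℕ) : ∀ a b : ℕ,
    Nat.factorial (a+m+1) * Nat.factorial (b+m+1) ≤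
      Nat.factorial m * Nat.factorial (a+b+m+2) := by
  intro a
  induction a with
  | zero =>
    intro b
    have h1 : Nat.factorial (0+m+1) = (m+1) * Nat.factorial m := by
      simp [Nat.factorial_succ]
    have h2 : Nat.factorial (0+b+m+2) = (b+m+2) * Nat.factorial (b+m+1) := by
      have : 0+b+m+2 = (b+m+1)+1 := by omega
      rw [this, Nat.factorial_succ]
    rw [h1, h2]
    calc (m+1) * Nat.factorial m * Nat.factorial (b+m+1)
        ≤ (b+m+2) * (Nat.factorial m * Nat.factorial (b+m+1)) := by
          rw [← mul_assoc]
          exact Nat.mul_le_mul_right _ (Nat.mul_le_mul_right _ (by omega))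
      _ = Nat.factorial m * ((b+m+2) * Nat.factorial (b+m+1)) := by ring
  | succ a ih =>
    intro b
    have h1 : Nat.factorial (a+1+m+1) = (a+m+2) * Nat.factorial (a+m+1) := by
      have : a+1+m+1 = (a+m+1)+1 := by omega
      rw [this, Nat.factorial_succ]
    have h2 : Nat.factorial (a+1+b+m+2) = (a+b+m+3) * Nat.factorial (a+b+m+2) := by
      have : a+1+b+m+2 = (a+b+m+2)+1 := by omega
      rw [this, Nat.factorial_succ]
    rw [h1, h2, mul_assoc]
    calc (a+m+2) * (Nat.factorial (a+m+1) * Nat.factorial (b+m+1))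
        ≤ (a+b+m+3) * (Nat.factorial m * Nat.factorial (a+b+m+2)) :=
          Nat.mul_le_mul (by omega) (ih b)
      _ = Nat.factorial m * ((a+b+m+3) * Nat.factorial (a+b+m+2)) := by ring

lemma keyIneq (m : ℕ) {x : ℝ} (hx : 0 < x) :
    x ^ (m+1) * fTail (m+1) x <
      ((m:ℝ)+1) * x ^ m * fTail (m+2) x
        + (Nat.factorial m : ℝ) * (fTail (m+1) x)^2 := by
  set A : ℕ → ℝ := fun n => x ^ (n+(m+1)) / (Nat.factorial (n+(m+1)) : ℝ) with hA
  have hApos : ∀ n, 0 < A n := fun n => by simp only [hA]; positivity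
  have hAsum : Summable A := summable_tail (m+1) x
  have hAnorm : Summable (fun n => ‖A n‖) := by
    simpa [Real.norm_eq_abs, abs_of_pos (hApos _)] using hAsum
  have hsq : (fTail (m+1) x)^2 = ∑' n : ℕ, ∑ p ∈ antidiagonal n, A p.1 * A p.2 := by
    rw [sq, fTail_tsum]
    exact tsum_mul_tsum_eq_tsum_sum_antidiagonal_of_summable_norm hAnorm hAnorm
  have hSsum : Summable (fun n : ℕ => ∑ p ∈ antidiagonal n, A p.1 * A p.2) :=
    (summable_norm_sum_mul_antidiagonal_of_summable_norm hAnorm hAnorm).of_norm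
  -- termwise identity for the left-hand side difference
  have hterm : ∀ n : ℕ,
      x ^ (m+1) * A n - ((m:ℝ)+1) * x ^ m * (x ^ (n+(m+2)) / (Nat.factorial (n+(m+2)) : ℝ))
        = ((n:ℝ)+1) * x ^ (n+2*m+2) / (Nat.factorial (n+m+2) : ℝ) := by
    intro n
    simp only [hA, show n+(m+1) = n+m+1 from by omega, show n+(m+2) = n+m+2 from by omega]
    have hfac2 : ((Nat.factorial (n+m+2)) : ℝ)
        = ((n:ℝ)+m+2) * (Nat.factorial (n+m+1) : ℝ) := by
      rw [show n+m+2 = (n+m+1)+1 from rfl, Nat.factorial_succ]; push_cast; ring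
    have hx1 : x ^ (m+1) * x ^ (n+m+1) = x ^ (n+2*m+2) := by
      rw [← pow_add]; congr 1; omega
    have hx2 : x ^ m * x ^ (n+m+2) = x ^ (n+2*m+2) := by
      rw [← pow_add]; congr 1; omega
    have h1 : ((Nat.factorial (n+m+1)) : ℝ) ≠ 0 := by positivity
    have h2 : ((n:ℝ)+m+2) ≠ 0 := by positivity
    rw [hfac2]
    field_simp
    linear_combination ((((n:ℝ)+m+2) * (Nat.factorial (n+m+1) : ℝ))^2) * hx1
      - ((m:ℝ)+1) * (((n:ℝ)+m+2)) * ((Nat.factorial (n+m+1) : ℝ))^2 * hx2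
  have hL : x ^ (m+1) * fTail (m+1) x - ((m:ℝ)+1) * x ^ m * fTail (m+2) x
      = ∑' n : ℕ, ((n:ℝ)+1) * x ^ (n+2*m+2) / (Nat.factorial (n+m+2) : ℝ) := by
    rw [fTail_tsum (m+1), fTail_tsum (m+2), ← tsum_mul_left, ← tsum_mul_left,
      ← Summable.tsum_sub (hAsum.mul_left _) ((summable_tail (m+2) x).mul_left _)]
    exact tsum_congr hterm
  have hLsum : Summable
      (fun n : ℕ => ((n:ℝ)+1) * x ^ (n+2*m+2) / (Nat.factorial (n+m+2) : ℝ)) := by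
    refine Summable.congr ((hAsum.mul_left (x^(m+1))).sub
      (((summable_tail (m+2) x).mul_left (((m:ℝ)+1) * x ^ m)).congr ?_)) hterm
    intro n; ring
  -- termwise comparison
  have hcomp : ∀ n : ℕ,
      ((n:ℝ)+1) * x ^ (n+2*m+2) / (Nat.factorial (n+m+2) : ℝ)
        ≤ (Nat.factorial m : ℝ) * ∑ p ∈ antidiagonal n, A p.1 * A p.2 := by
    intro n
    rw [Finset.mul_sum]
    have hcard : ∀ p ∈ antidiagonal n,
        x ^ (n+2*m+2) / (Nat.factorial (n+m+2) : ℝ)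
          ≤ (Nat.factorial m : ℝ) * (A p.1 * A p.2) := by
      rintro ⟨a, b⟩ hab
      rw [Finset.HasAntidiagonal.mem_antidiagonal] at hab
      simp only [hA]
      have hxp : x ^ (a+(m+1)) * x ^ (b+(m+1)) = x ^ (n+2*m+2) := by
        rw [← pow_add]; congr 1; omega
      have hnat : Nat.factorial (a+m+1) * Nat.factorial (b+m+1)
          ≤ Nat.factorial m * Nat.factorial (n+m+2) := by
        have := fact_ineq m a b
        rwa [show a+b+m+2 = n+m+2 from by omega] at this
      have hf1 : (0:ℝ) < Nat.factorial (a+(m+1)) := by positivity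
      have hf2 : (0:ℝ) < Nat.factorial (b+(m+1)) := by positivity
      have hf3 : (0:ℝ) < Nat.factorial (n+m+2) := by positivity
      rw [div_mul_div_comm, ← mul_div_assoc, hxp, div_le_div_iff₀ hf3 (by positivity)]
      have hcast : (Nat.factorial (a+(m+1)) : ℝ) * (Nat.factorial (b+(m+1)) : ℝ)
          ≤ (Nat.factorial m : ℝ) * (Nat.factorial (n+m+2) : ℝ) := by
        rw [show a+(m+1) = a+m+1 from by omega, show b+(m+1) = b+m+1 from by omega]
        exact_mod_cast hnat
      calc x ^ (n+2*m+2) * ((Nat.factorial (a+(m+1)) : ℝ) * (Nat.factorial (b+(m+1)) : ℝ))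
          ≤ x ^ (n+2*m+2) * ((Nat.factorial m : ℝ) * (Nat.factorial (n+m+2) : ℝ)) := by
            exact mul_le_mul_of_nonneg_left hcast (by positivity)
        _ = (Nat.factorial m : ℝ) * x ^ (n+2*m+2) * (Nat.factorial (n+m+2) : ℝ) := by ring
    calc ((n:ℝ)+1) * x ^ (n+2*m+2) / (Nat.factorial (n+m+2) : ℝ)
        = ∑ _p ∈ antidiagonal n, x ^ (n+2*m+2) / (Nat.factorial (n+m+2) : ℝ) := by
          rw [Finset.sum_const, Finset.Nat.card_antidiagonal]
          push_cast; ring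
      _ ≤ _ := Finset.sum_le_sum hcard
  -- strict comparison at n = 0
  have hstrict : ((0:ℝ)+1) * x ^ (0+2*m+2) / (Nat.factorial (0+m+2) : ℝ)
      < (Nat.factorial m : ℝ) * ∑ p ∈ antidiagonal 0, A p.1 * A p.2 := by
    rw [Finset.Nat.antidiagonal_zero, Finset.sum_singleton]
    simp only [hA]
    have hxp : x ^ (0+(m+1)) * x ^ (0+(m+1)) = x ^ (0+2*m+2) := by
      rw [← pow_add]; congr 1; omega
    have hf1 : (0:ℝ) < Nat.factorial (0+(m+1)) := by positivity
    have hf3 : (0:ℝ) < Nat.factorial (0+m+2) := by positivity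
    rw [div_mul_div_comm, ← mul_div_assoc, hxp, div_lt_div_iff₀ hf3 (by positivity)]
    have hcast : (Nat.factorial (0+(m+1)) : ℝ) * (Nat.factorial (0+(m+1)) : ℝ)
        < (Nat.factorial m : ℝ) * (Nat.factorial (0+m+2) : ℝ) := by
      have e1 : (Nat.factorial (0+(m+1)) : ℝ) = ((m:ℝ)+1) * (Nat.factorial m : ℝ) := by
        rw [show 0+(m+1) = m+1 from by omega, Nat.factorial_succ]; push_cast; ring
      have e2 : (Nat.factorial (0+m+2) : ℝ)
          = ((m:ℝ)+2) * (((m:ℝ)+1) * (Nat.factorial m : ℝ)) := by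
        rw [show 0+m+2 = (m+1)+1 from by omega, Nat.factorial_succ, Nat.factorial_succ]
        push_cast; ring
      rw [e1, e2]
      have hfm : (0:ℝ) < (Nat.factorial m : ℝ) := by positivity
      nlinarith [hfm]
    calc ((0:ℝ)+1) * x ^ (0+2*m+2) * ((Nat.factorial (0+(m+1)) : ℝ) * (Nat.factorial (0+(m+1)) : ℝ))
        = x ^ (0+2*m+2) * ((Nat.factorial (0+(m+1)) : ℝ) * (Nat.factorial (0+(m+1)) : ℝ)) := by ring
      _ < x ^ (0+2*m+2) * ((Nat.factorial m : ℝ) * (Nat.factorial (0+m+2) : ℝ)) :=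
          mul_lt_mul_of_pos_left hcast (by positivity)
      _ = (Nat.factorial m : ℝ) * x ^ (0+2*m+2) * (Nat.factorial (0+m+2) : ℝ) := by ring
  have hmain : x ^ (m+1) * fTail (m+1) x - ((m:ℝ)+1) * x ^ m * fTail (m+2) x
      < (Nat.factorial m : ℝ) * (fTail (m+1) x)^2 := by
    rw [hL, hsq, ← tsum_mul_left]
    refine Summable.tsum_lt_tsum_of_nonneg (i := 0) (fun n => by positivity) hcomp ?_
      (hSsum.mul_left _)
    simpa using hstrict
  linarith

lemma Npos (m : ℕ) {x : ℝ} (hx : 0 < x) :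
    0 < fTail (m+2) x * fTail (m+3) x + x * fTail (m+1) x * fTail (m+3) x
        - x * (fTail (m+2) x)^2 := by
  have hQ := keyIneq (m+2) hx
  simp only [show m+2+1 = m+3 from rfl, show m+2+2 = m+4 from rfl] at hQ
  push_cast at hQ
  have e1 : fTail (m+1) x = fTail (m+2) x + x^(m+1)/(Nat.factorial (m+1) : ℝ) :=
    fTail_succ (m+1) x
  have e2 : fTail (m+2) x = fTail (m+3) x + x^(m+2)/(Nat.factorial (m+2) : ℝ) :=
    fTail_succ (m+2) x
  have e4 : fTail (m+3) x = fTail (m+4) x + x^(m+3)/(Nat.factorial (m+3) : ℝ) :=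
    fTail_succ (m+3) x
  have fac2 : (Nat.factorial (m+2) : ℝ) = ((m:ℝ)+2) * (Nat.factorial (m+1) : ℝ) := by
    rw [Nat.factorial_succ]; push_cast; ring
  have fac3 : (Nat.factorial (m+3) : ℝ)
      = ((m:ℝ)+3) * (((m:ℝ)+2) * (Nat.factorial (m+1) : ℝ)) := by
    rw [Nat.factorial_succ, Nat.factorial_succ]; push_cast; ring
  have hF : (0:ℝ) < (Nat.factorial (m+1) : ℝ) := by positivity
  have hfac2pos : (0:ℝ) < (Nat.factorial (m+2) : ℝ) := by positivity
  have key : (Nat.factorial (m+2) : ℝ) *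
      (fTail (m+2) x * fTail (m+3) x + x * fTail (m+1) x * fTail (m+3) x
        - x * (fTail (m+2) x)^2)
      = ((m:ℝ)+2+1) * x^(m+2) * fTail (m+4) x
          + (Nat.factorial (m+2) : ℝ) * (fTail (m+3) x)^2 - x^(m+3) * fTail (m+3) x := by
    rw [e1, e2, e4, fac2, fac3]
    field_simp
    ring
  have hN : 0 < (Nat.factorial (m+2) : ℝ) *
      (fTail (m+2) x * fTail (m+3) x + x * fTail (m+1) x * fTail (m+3) x
        - x * (fTail (m+2) x)^2) := by
    rw [key]; linarith
  nlinarith [hN, hfac2pos]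

lemma g_deriv (m : ℕ) {x : ℝ} (hx : 0 < x) :
    HasDerivAt (fun y : ℝ => y * fTail (m+2) y / fTail (m+3) y)
      ((fTail (m+2) x * fTail (m+3) x + x * fTail (m+1) x * fTail (m+3) x
          - x * (fTail (m+2) x)^2) / (fTail (m+3) x)^2) x := by
  have hu : HasDerivAt (fun y : ℝ => y * fTail (m+2) y)
      (1 * fTail (m+2) x + x * fTail (m+1) x) x :=
    (hasDerivAt_id x).mul (hasDerivAt_fTail (m+1) x)
  have hv : HasDerivAt (fTail (m+3)) (fTail (m+2) x) x := hasDerivAt_fTail (m+2) x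
  have hne : fTail (m+3) x ≠ 0 := ne_of_gt (fTail_pos hx)
  have := hu.fun_div hv hne
  refine this.congr_deriv ?_
  ring

lemma g_strictMono (m : ℕ) :
    StrictMonoOn (fun y : ℝ => y * fTail (m+2) y / fTail (m+3) y) (Set.Ioi (0:ℝ)) := by
  apply strictMonoOn_of_deriv_pos (convex_Ioi 0)
  · intro y hy
    exact ((g_deriv m (Set.mem_Ioi.mp hy)).continuousAt).continuousWithinAt
  · intro y hy
    rw [interior_Ioi, Set.mem_Ioi] at hy
    rw [(g_deriv m hy).deriv]
    exact div_pos (Npos m hy) (pow_pos (fTail_pos hy) 2)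

lemma g_gt (m : ℕ) {y : ℝ} (hy : 0 < y) :
    ((m:ℝ)+3) * fTail (m+3) y < y * fTail (m+2) y := by
  have hR : y * fTail (m+2) y
      = ∑' n : ℕ, ((n:ℝ)+m+3) * y ^ (n+m+3) / (Nat.factorial (n+m+3) : ℝ) := by
    rw [fTail_tsum (m+2), ← tsum_mul_left]
    apply tsum_congr
    intro n
    have hfac : (Nat.factorial (n+m+3) : ℝ)
        = ((n:ℝ)+m+3) * (Nat.factorial (n+m+2) : ℝ) := by
      rw [show n+m+3 = (n+m+2)+1 from rfl, Nat.factorial_succ]; push_cast; ring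
    have h1 : (Nat.factorial (n+m+2) : ℝ) ≠ 0 := by positivity
    have h2 : ((n:ℝ)+m+3) ≠ 0 := by positivity
    simp only [show n+(m+2) = n+m+2 from by omega]
    rw [hfac]
    have hyy : y * y ^ (n+m+2) = y ^ (n+m+3) := by
      rw [← pow_succ']
    field_simp
    linear_combination (((n:ℝ)+m+3))^2 * (Nat.factorial (n+m+2):ℝ) * hyy
  have hRsum : Summable (fun n : ℕ => ((n:ℝ)+m+3) * y ^ (n+m+3) / (Nat.factorial (n+m+3) : ℝ)) := by
    refine Summable.congr ((summable_tail (m+2) y).mul_left y) ?_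
    intro n
    have hfac : (Nat.factorial (n+m+3) : ℝ)
        = ((n:ℝ)+m+3) * (Nat.factorial (n+m+2) : ℝ) := by
      rw [show n+m+3 = (n+m+2)+1 from rfl, Nat.factorial_succ]; push_cast; ring
    have h1 : (Nat.factorial (n+m+2) : ℝ) ≠ 0 := by positivity
    have h2 : ((n:ℝ)+m+3) ≠ 0 := by positivity
    simp only [show n+(m+2) = n+m+2 from by omega]
    rw [hfac]
    have hyy : y * y ^ (n+m+2) = y ^ (n+m+3) := by rw [← pow_succ']
    field_simp
    linear_combination (((n:ℝ)+m+3))^2 * (Nat.factorial (n+m+2):ℝ) * hyy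
  have hL : ((m:ℝ)+3) * fTail (m+3) y
      = ∑' n : ℕ, ((m:ℝ)+3) * y ^ (n+m+3) / (Nat.factorial (n+m+3) : ℝ) := by
    rw [fTail_tsum (m+3), ← tsum_mul_left]
    apply tsum_congr
    intro n
    simp only [show n+(m+3) = n+m+3 from by omega]
    ring
  rw [hL, hR]
  refine Summable.tsum_lt_tsum_of_nonneg (i := 1) (fun n => by positivity) ?_ ?_ hRsum
  · intro n
    apply div_le_div_of_nonneg_right ?_ (by positivity)
    have hc : ((m:ℝ)+3) ≤ ((n:ℝ)+m+3) := by
      have := Nat.cast_nonneg (α := ℝ) n; linarith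
    exact mul_le_mul_of_nonneg_right hc (by positivity)
  · apply div_lt_div_of_pos_right ?_ (by positivity)
    have hc : ((m:ℝ)+3) < (((1:ℕ):ℝ)+m+3) := by norm_num
    exact mul_lt_mul_of_pos_right hc (by positivity)

lemma S_summable (m : ℕ) (y : ℝ) (hy : 0 < y) :
    Summable (fun n : ℕ => y ^ n / (Nat.factorial (n+m+2) : ℝ)) := by
  refine Summable.of_nonneg_of_le (fun n => by positivity) ?_
    (Real.summable_pow_div_factorial y)
  intro n
  apply div_le_div_of_nonneg_left (by positivity) (by positivity)
  exact_mod_cast Nat.factorial_le (by omega)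

lemma fTail_eq_S (m : ℕ) (y : ℝ) :
    fTail (m+2) y = y ^ (m+2) * ∑' n : ℕ, y ^ n / (Nat.factorial (n+m+2) : ℝ) := by
  rw [fTail_tsum, ← tsum_mul_left]
  apply tsum_congr
  intro n
  rw [show n+(m+2) = n+m+2 from by omega, mul_div_assoc', ← pow_add]
  congr 2
  omega

lemma S_pos (m : ℕ) {y : ℝ} (hy : 0 < y) :
    0 < ∑' n : ℕ, y ^ n / (Nat.factorial (n+m+2) : ℝ) := by
  have h0 : (0:ℝ) < y ^ 0 / (Nat.factorial (0+m+2) : ℝ) := by positivity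
  calc (0:ℝ) < y ^ 0 / (Nat.factorial (0+m+2) : ℝ) := h0
    _ ≤ _ := Summable.le_tsum (S_summable m y hy) 0 (fun n _ => by positivity)

lemma phi_anti (m : ℕ) :
    StrictAntiOn (fun y : ℝ => y ^ (m+2) / fTail (m+2) y) (Set.Ioi (0:ℝ)) := by
  intro x hx y hy hxy
  rw [Set.mem_Ioi] at hx hy
  have hSx := S_pos m hx
  have hSy := S_pos m hy
  have hlt : (∑' n : ℕ, x ^ n / (Nat.factorial (n+m+2) : ℝ))
      < ∑' n : ℕ, y ^ n / (Nat.factorial (n+m+2) : ℝ) := by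
    refine Summable.tsum_lt_tsum_of_nonneg (i := 1) (fun n => by positivity) ?_ ?_ (S_summable m y hy)
    · intro n
      exact div_le_div_of_nonneg_right (pow_le_pow_left₀ hx.le hxy.le n) (by positivity)
    · exact div_lt_div_of_pos_right (by simpa using hxy) (by positivity)
  have ex : x ^ (m+2) / fTail (m+2) x = 1 / ∑' n : ℕ, x ^ n / (Nat.factorial (n+m+2) : ℝ) := by
    rw [fTail_eq_S]
    rw [div_mul_eq_div_div_swap, div_right_comm,
      div_self (by positivity : x ^ (m+2) ≠ 0)]
  have ey : y ^ (m+2) / fTail (m+2) y = 1 / ∑' n : ℕ, y ^ n / (Nat.factorial (n+m+2) : ℝ) := by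
    rw [fTail_eq_S]
    rw [div_mul_eq_div_div_swap, div_right_comm,
      div_self (by positivity : y ^ (m+2) ≠ 0)]
  simp only [ex, ey]
  exact one_div_lt_one_div_of_lt hSx hlt

/-- with `λ_{k,c}` the unique positive root of `λ f_{k-1}(λ)/f_k(λ) = c`
(for `c > k`) and `q_{k,c} = λ_{k,c}^{k-1}/((k-1)! f_{k-1}(λ_{k,c}))`, the map
`c ↦ (k-1) q_{k,c}` is strictly decreasing on `(k, ∞)`, and it takes the value `1` at
`c = c_k' := μ* f_{k-1}(μ*)/f_k(μ*)` where `μ*` is the unique positive solution of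
`μ^{k-1}/(k-2)! = f_{k-1}(μ)`. -/
theorem q_strictAnti_and_value_one (k : ℕ) (hk : 3 ≤ k)
    (lam : ℝ → ℝ)
    (hlam : ∀ c : ℝ, (k : ℝ) < c →
      0 < lam c ∧ lam c * fTail (k - 1) (lam c) / fTail k (lam c) = c)
    (μstar : ℝ) (hμpos : 0 < μstar)
    (hμeq : μstar ^ (k - 1) / (Nat.factorial (k - 2) : ℝ) = fTail (k - 1) μstar) :
    StrictAntiOn
      (fun c : ℝ => ((k : ℝ) - 1) *
        (lam c ^ (k - 1) / ((Nat.factorial (k - 1) : ℝ) * fTail (k - 1) (lam c))))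
      (Set.Ioi (k : ℝ)) ∧
    ((k : ℝ) - 1) *
        (lam (μstar * fTail (k - 1) μstar / fTail k μstar) ^ (k - 1) /
          ((Nat.factorial (k - 1) : ℝ) *
            fTail (k - 1) (lam (μstar * fTail (k - 1) μstar / fTail k μstar)))) = 1 := by
  obtain ⟨m, rfl⟩ : ∃ m, k = m + 3 := ⟨k - 3, by omega⟩
  simp only [show m+3-1 = m+2 from rfl, show m+3-2 = m+1 from rfl] at hlam hμeq ⊢
  have fac2 : (Nat.factorial (m+2) : ℝ) = ((m:ℝ)+2) * (Nat.factorial (m+1) : ℝ) := by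
    rw [Nat.factorial_succ]; push_cast; ring
  have hkcast : ((m+3:ℕ) : ℝ) - 1 = (m:ℝ) + 2 := by push_cast; ring
  have hg := g_strictMono m
  -- the value as a multiple of φ
  have hval : ∀ z : ℝ, 0 < z →
      ((m:ℝ)+2) * (z ^ (m+2) / ((Nat.factorial (m+2) : ℝ) * fTail (m+2) z))
        = (z ^ (m+2) / fTail (m+2) z) / (Nat.factorial (m+1) : ℝ) := by
    intro z hz
    have hT : (0:ℝ) < fTail (m+2) z := fTail_pos hz
    have hF : (0:ℝ) < (Nat.factorial (m+1) : ℝ) := by positivity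
    rw [fac2]
    field_simp
  constructor
  · intro c1 h1 c2 h2 hlt
    rw [Set.mem_Ioi] at h1 h2
    obtain ⟨hp1, he1⟩ := hlam c1 h1
    obtain ⟨hp2, he2⟩ := hlam c2 h2
    have hlamlt : lam c1 < lam c2 := by
      apply (hg.lt_iff_lt (Set.mem_Ioi.2 hp1) (Set.mem_Ioi.2 hp2)).mp
      show lam c1 * fTail (m+2) (lam c1) / fTail (m+3) (lam c1)
          < lam c2 * fTail (m+2) (lam c2) / fTail (m+3) (lam c2)
      rw [he1, he2]; exact hlt
    have hphi := phi_anti m (Set.mem_Ioi.2 hp1) (Set.mem_Ioi.2 hp2) hlamlt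
    simp only [hkcast]
    rw [hval _ hp1, hval _ hp2]
    have hF : (0:ℝ) < (Nat.factorial (m+1) : ℝ) := by positivity
    exact div_lt_div_of_pos_right hphi hF
  · set c' := μstar * fTail (m+2) μstar / fTail (m+3) μstar with hc'
    have hf3 : (0:ℝ) < fTail (m+3) μstar := fTail_pos hμpos
    have hgt : ((m+3:ℕ) : ℝ) < c' := by
      rw [hc', lt_div_iff₀ hf3]
      push_cast
      calc ((m:ℝ)+3) * fTail (m+3) μstar < μstar * fTail (m+2) μstar := g_gt m hμpos
        _ = _ := by ring
    obtain ⟨hp, he⟩ := hlam c' hgt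
    have hlc : lam c' = μstar := by
      apply hg.injOn (Set.mem_Ioi.2 hp) (Set.mem_Ioi.2 hμpos)
      simpa using he
    rw [hlc, hkcast, hval _ hμpos]
    have hT : (0:ℝ) < fTail (m+2) μstar := fTail_pos hμpos
    have hF : (0:ℝ) < (Nat.factorial (m+1) : ℝ) := by positivity
    rw [div_div, ← hμeq]
    field_simp
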